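/- arXiv:1402.5725 — 2 statements merged into one kernel-verified Lean document; each statement's English description precedes it below -/
import Mathlib

section
/- Let V ∈ C¹(ℝⁿ, ℝ) satisfy: (i) V'(q)·q ≥ μ₁V(q) − μ₂ for all q, with μ₁ > 0, μ₂ ≥ 0; (ii) liminf_{|q|→∞} V(q) ≥ h; (iii) 3V'(q)·q + (V''(q)q)·q ≠ 0 for all q ≠ 0. Fix q₀ ∈ ℝⁿ with q₀ ≠ 0 and assume h > μ₂/μ₁. Define g(a) = V(a q₀) + (1/2)V'(a q₀)·(a q₀) for a ≥ 0. Then there exists a > 0 with g(a) = h. -/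
open scoped RealInnerProductSpace

theorem stmt_3 (n : ℕ) (V : EuclideanSpace ℝ (Fin n) → ℝ) (μ₁ μ₂ h : ℝ)
    (hV : ContDiff ℝ 1 V)
    (hV2 : ∀ q : EuclideanSpace ℝ (Fin n), q ≠ 0 → DifferentiableAt ℝ (gradient V) q)
    (hμ₁ : 0 < μ₁) (hμ₂ : 0 ≤ μ₂)
    (hB₂ : ∀ q, ⟪gradient V q, q⟫ ≥ μ₁ * V q - μ₂)
    (hB₃ : ∀ ε > 0, ∃ M : ℝ, ∀ q : EuclideanSpace ℝ (Fin n), M ≤ ‖q‖ → h - ε ≤ V q)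
    (hB₄ : ∀ q : EuclideanSpace ℝ (Fin n), q ≠ 0 →
      3 * ⟪gradient V q, q⟫ + ⟪fderiv ℝ (gradient V) q q, q⟫ ≠ 0)
    (q₀ : EuclideanSpace ℝ (Fin n)) (hq₀ : q₀ ≠ 0)
    (hh : h > μ₂ / μ₁) :
    ∃ a : ℝ, a > 0 ∧
      V (a • q₀) + (1/2) * ⟪gradient V (a • q₀), a • q₀⟫ = h := by
  set f : ℝ → ℝ := fun a => V (a • q₀) + (1/2) * ⟪gradient V (a • q₀), a • q₀⟫ with hf
  have hgradcont : Continuous (gradient V) := by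
    have : (gradient V) = fun x => (InnerProductSpace.toDual ℝ _).symm (fderiv ℝ V x) := rfl
    rw [this]
    exact (InnerProductSpace.toDual ℝ _).symm.continuous.comp (hV.continuous_fderiv one_ne_zero)
  have hcurve : Continuous (fun a : ℝ => a • q₀) := continuous_id.smul continuous_const
  have hfc : Continuous f := by
    apply (hV.continuous.comp hcurve).add
    exact continuous_const.mul (continuous_inner.comp ((hgradcont.comp hcurve).prodMk hcurve))
  have hq₀pos : 0 < ‖q₀‖ := norm_pos_iff.mpr hq₀
  have hμh : μ₂ < μ₁ * h := by
    rwa [gt_iff_lt, div_lt_iff₀ hμ₁, mul_comm] at hh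
  set ε : ℝ := (μ₁ * h - μ₂) / (2 + μ₁) with hε
  have hεpos : 0 < ε := div_pos (by linarith) (by linarith)
  obtain ⟨M, hM⟩ := hB₃ ε hεpos
  set b : ℝ := max 1 (M / ‖q₀‖) with hb
  have hbpos : (0:ℝ) < b := lt_of_lt_of_le one_pos (le_max_left _ _)
  have hbM : M ≤ ‖b • q₀‖ := by
    rw [norm_smul, Real.norm_eq_abs, abs_of_pos hbpos]
    calc M = (M / ‖q₀‖) * ‖q₀‖ := by field_simp
    _ ≤ b * ‖q₀‖ := by
      apply mul_le_mul_of_nonneg_right (le_max_right _ _) hq₀pos.le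
  have hVb : h - ε ≤ V (b • q₀) := hM _ hbM
  have hfb : h ≤ f b := by
    have h1 := hB₂ (b • q₀)
    have hkey : (1 + μ₁/2) * (h - ε) - μ₂/2 ≥ h := by
      have : (1 + μ₁/2) * ε ≤ (μ₁ * h - μ₂)/2 := by
        rw [hε, ← mul_div_assoc, div_le_div_iff₀ (by linarith : (0:ℝ) < 2 + μ₁) two_pos]
        ring_nf
        exact le_rfl
      nlinarith
    have h2 : (1 + μ₁/2) * (h - ε) ≤ (1 + μ₁/2) * V (b • q₀) :=
      mul_le_mul_of_nonneg_left hVb (by linarith)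
    simp only [hf]
    nlinarith
  have hf0 : f 0 < h := by
    have h0 := hB₂ 0
    simp only [inner_zero_right] at h0
    have hV0 : V 0 ≤ μ₂ / μ₁ := by
      rw [le_div_iff₀ hμ₁]; linarith
    simp only [hf, zero_smul, inner_zero_right, mul_zero, add_zero]
    linarith
  have := intermediate_value_Icc hbpos.le hfc.continuousOn
  have hhmem : h ∈ Set.Icc (f 0) (f b) := ⟨hf0.le, hfb⟩
  obtain ⟨a, ha, hfa⟩ := this hhmem
  refine ⟨a, ?_, hfa⟩
  rcases lt_or_eq_of_le ha.1 with hp | hp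
  · exact hp
  · exfalso; rw [← hp] at hfa; exact absurd hfa hf0.ne
end

section
/- Let V ∈ C¹(ℝⁿ, ℝ) with V'(q)·q ≥ μ₁V(q) − μ₂ for all q (μ₁ > 0, μ₂ ≥ 0), and h > μ₂/μ₁. Let E be the mean-zero subspace of H¹ with norm ‖u‖² = ∫₀¹|u̇|². Let f(u) = (1/2)‖u‖² ∫₀¹(h − V(u))dt and c > 0. If a sequence (uₙ) ⊂ E satisfies f(uₙ) → c and ⟨f'(uₙ), uₙ⟩ → 0, then (‖uₙ‖) is bounded. -/
open scoped RealInnerProductSpace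

theorem stmt_13 (n : ℕ) (V : EuclideanSpace ℝ (Fin n) → ℝ) (μ₁ μ₂ h c : ℝ)
    (hV : ContDiff ℝ 1 V) (hμ₁ : 0 < μ₁) (hμ₂ : 0 ≤ μ₂)
    (hB₂ : ∀ q, ⟪gradient V q, q⟫ ≥ μ₁ * V q - μ₂)
    (hh : h > μ₂ / μ₁) (hc : 0 < c)
    (u : ℕ → ℝ → EuclideanSpace ℝ (Fin n))
    (hreg : ∀ k, ContDiff ℝ 1 (u k))
    (hper : ∀ k, Function.Periodic (u k) 1)
    (hmean : ∀ k, (∫ t in (0:ℝ)..1, u k t) = 0)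
    (hf : Filter.Tendsto
      (fun k => (1/2) * (∫ t in (0:ℝ)..1, ‖deriv (u k) t‖ ^ 2)
        * (∫ t in (0:ℝ)..1, (h - V (u k t)))) Filter.atTop (nhds c))
    (hpair : Filter.Tendsto
      (fun k => (∫ t in (0:ℝ)..1, ‖deriv (u k) t‖ ^ 2)
        * (∫ t in (0:ℝ)..1, (h - V (u k t) - (1/2) * ⟪gradient V (u k t), u k t⟫)))
      Filter.atTop (nhds 0)) :
    ∃ C : ℝ, ∀ k, (∫ t in (0:ℝ)..1, ‖deriv (u k) t‖ ^ 2) ≤ C := by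
  -- notation
  set A : ℕ → ℝ := fun k => ∫ t in (0:ℝ)..1, ‖deriv (u k) t‖ ^ 2 with hA
  set B : ℕ → ℝ := fun k => ∫ t in (0:ℝ)..1, (h - V (u k t)) with hB
  set P : ℕ → ℝ := fun k => A k *
    (∫ t in (0:ℝ)..1, (h - V (u k t) - (1/2) * ⟪gradient V (u k t), u k t⟫)) with hP
  have hgradcont : Continuous (gradient V) := by
    unfold gradient
    exact (InnerProductSpace.toDual ℝ _).symm.continuous.comp (hV.continuous_fderiv one_ne_zero)
  have hε : (0:ℝ) < μ₁ * h / 2 - μ₂ / 2 := by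
    have : μ₂ / μ₁ * μ₁ < h * μ₁ := by
      exact mul_lt_mul_of_pos_right hh hμ₁
    rw [div_mul_cancel₀ _ (ne_of_gt hμ₁)] at this
    nlinarith
  set ε : ℝ := μ₁ * h / 2 - μ₂ / 2 with hεdef
  -- A k ≥ 0
  have hA0 : ∀ k, 0 ≤ A k := fun k =>
    intervalIntegral.integral_nonneg (by norm_num) (fun t _ => by positivity)
  -- key inequality: ε * A k ≤ (1 + μ₁/2) * (A k * B k) - P k
  have key : ∀ k, ε * A k ≤ (1 + μ₁/2) * (A k * B k) - P k := by
    intro k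
    have hucont : Continuous (u k) := (hreg k).continuous
    have hVc : Continuous fun t => V (u k t) := hV.continuous.comp hucont
    have hGc : Continuous fun t => ⟪gradient V (u k t), u k t⟫ :=
      (hgradcont.comp hucont).inner hucont
    -- integral of V ∘ u
    have hBV : (∫ t in (0:ℝ)..1, V (u k t)) = h - B k := by
      have : B k = (∫ t in (0:ℝ)..1, (h:ℝ)) - ∫ t in (0:ℝ)..1, V (u k t) := by
        rw [hB]
        exact intervalIntegral.integral_sub (intervalIntegrable_const)
          (hVc.intervalIntegrable _ _)
      simp [intervalIntegral.integral_const] at this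
      linarith
    -- pointwise bound on the pairing integrand
    have hmono : (∫ t in (0:ℝ)..1, (h - V (u k t) - (1/2) * ⟪gradient V (u k t), u k t⟫))
        ≤ ∫ t in (0:ℝ)..1, ((h + μ₂/2) - (1 + μ₁/2) * V (u k t)) := by
      apply intervalIntegral.integral_mono_on (by norm_num)
      · exact ((continuous_const.sub hVc).sub (continuous_const.mul hGc)).intervalIntegrable _ _
      · exact (continuous_const.sub (continuous_const.mul hVc)).intervalIntegrable _ _
      · intro t _
        have := hB₂ (u k t)
        nlinarith
    have hrhs : (∫ t in (0:ℝ)..1, ((h + μ₂/2) - (1 + μ₁/2) * V (u k t)))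
        = (h + μ₂/2) - (1 + μ₁/2) * (h - B k) := by
      rw [intervalIntegral.integral_sub intervalIntegrable_const
        ((hVc.intervalIntegrable 0 1).const_mul (1 + μ₁/2)),
        intervalIntegral.integral_const_mul, hBV]
      simp
    have hPle : P k ≤ A k * ((h + μ₂/2) - (1 + μ₁/2) * (h - B k)) := by
      rw [hP]
      exact mul_le_mul_of_nonneg_left (hrhs ▸ hmono) (hA0 k)
    nlinarith [hA0 k]
  -- the RHS is bounded above since it converges
  have hAB : Filter.Tendsto (fun k => (1 + μ₁/2) * (A k * B k) - P k)
      Filter.atTop (nhds ((1 + μ₁/2) * (2*c) - 0)) := by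
    apply Filter.Tendsto.sub _ hpair
    have := hf.const_mul 2
    have heq : (fun k => 2 * ((1/2) * A k * B k)) = fun k => A k * B k := by
      funext k; ring
    rw [heq] at this
    exact this.const_mul _
  obtain ⟨M, hM⟩ := hAB.bddAbove_range
  refine ⟨M / ε, fun k => ?_⟩
  have h1 : ε * A k ≤ M := (key k).trans (hM ⟨k, rfl⟩)
  show A k ≤ M / ε
  rw [le_div_iff₀ hε]
  nlinarith
end
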